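/- If A is an α-Noetherian ring, then the polynomial ring A[X] is (ω ⊗ α)-Noetherian, where ⊗ is the Hessenberg natural product. -/

import Mathlib

open Ordinal

/-- A list is good ((-1)-good) if it is nonempty and its last entry lies in the
submodule generated by the preceding entries. -/
def GoodList (A : Type*) {M : Type*} [Ring A] [AddCommGroup M] [Module A M]
    (σ : List M) : Prop :=
  ∃ (l : List M) (x : M), σ = l ++ [x] ∧ x ∈ Submodule.span A {y | y ∈ l}

/-- A list `σ` is `α`-good if for every `x`, the appended list `σ.x` is either good
((-1)-good) or `β`-good for some ordinal `β < α`.  A module `M` is `α`-Noetherian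
if the empty list `[] : List M` is `α`-good; a ring is `α`-Noetherian if it is
`α`-Noetherian as a left module over itself. -/
def AlphaGood (A : Type*) {M : Type*} [Ring A] [AddCommGroup M] [Module A M]
    (α : Ordinal) (σ : List M) : Prop :=
  ∀ x : M, GoodList A (σ ++ [x]) ∨ ∃ (β : Ordinal) (_ : β < α), AlphaGood A β (σ ++ [x])
termination_by α
namespace Ordinal
universe u
noncomputable def nadd : Ordinal.{u} → Ordinal.{u} → Ordinal.{u}
  | a, b =>
    max (blsub.{u, u} a fun a' _ => nadd a' b) (blsub.{u, u} b fun b' _ => nadd a b')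
termination_by o₁ o₂ => (o₁, o₂)
noncomputable def nmul : Ordinal.{u} → Ordinal.{u} → Ordinal.{u}
  | a, b => sInf {c | ∀ a' < a, ∀ b' < b, nadd (nmul a' b) (nmul a b') < nadd c (nmul a' b')}
termination_by a b => (a, b)
end Ordinal

local infixl:65 " ♯ " => Ordinal.nadd
local infixl:70 " ⨳ " => Ordinal.nmul

namespace Ordinal
universe v

theorem nadd_def' (a b : Ordinal.{v}) : a ♯ b =
    max (blsub.{v, v} a fun a' _ => a' ♯ b) (blsub.{v, v} b fun b' _ => a ♯ b') := by
  rw [nadd]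

theorem nadd_le_iff {a b c : Ordinal} :
    b ♯ c ≤ a ↔ (∀ b' < b, b' ♯ c < a) ∧ ∀ c' < c, b ♯ c' < a := by
  rw [nadd_def', max_le_iff, blsub_le_iff, blsub_le_iff]

theorem lt_nadd_iff {a b c : Ordinal} :
    a < b ♯ c ↔ (∃ b' < b, a ≤ b' ♯ c) ∨ ∃ c' < c, a ≤ b ♯ c' := by
  rw [nadd_def', lt_max_iff, lt_blsub_iff, lt_blsub_iff]
  simp only [exists_prop]

theorem nadd_lt_nadd_left {b c : Ordinal} (h : b < c) (a : Ordinal) : a ♯ b < a ♯ c :=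
  lt_nadd_iff.2 (Or.inr ⟨b, h, le_rfl⟩)

theorem nadd_lt_nadd_right {b c : Ordinal} (h : b < c) (a : Ordinal) : b ♯ a < c ♯ a :=
  lt_nadd_iff.2 (Or.inl ⟨b, h, le_rfl⟩)

theorem nadd_le_nadd_left {b c : Ordinal} (h : b ≤ c) (a : Ordinal) : a ♯ b ≤ a ♯ c := by
  rcases h.eq_or_lt with rfl | h
  · exact le_rfl
  · exact (nadd_lt_nadd_left h a).le

theorem nadd_le_nadd_right {b c : Ordinal} (h : b ≤ c) (a : Ordinal) : b ♯ a ≤ c ♯ a := by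
  rcases h.eq_or_lt with rfl | h
  · exact le_rfl
  · exact (nadd_lt_nadd_right h a).le

theorem nadd_le_nadd {a b c d : Ordinal} (h₁ : a ≤ b) (h₂ : c ≤ d) : a ♯ c ≤ b ♯ d :=
  (nadd_le_nadd_left h₂ a).trans (nadd_le_nadd_right h₁ d)

theorem nadd_lt_nadd_of_lt_of_le {a b c d : Ordinal} (h₁ : a < b) (h₂ : c ≤ d) :
    a ♯ c < b ♯ d :=
  (nadd_le_nadd_left h₂ a).trans_lt (nadd_lt_nadd_right h₁ d)

theorem nadd_lt_nadd_of_le_of_lt {a b c d : Ordinal} (h₁ : a ≤ b) (h₂ : c < d) :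
    a ♯ c < b ♯ d :=
  (nadd_lt_nadd_left h₂ a).trans_le (nadd_le_nadd_right h₁ d)

theorem lt_of_nadd_lt_nadd_right {a b c : Ordinal} (h : b ♯ a < c ♯ a) : b < c :=
  lt_of_not_ge fun h' => (h.trans_le (nadd_le_nadd_right h' a)).false

theorem nadd_comm (a b : Ordinal) : a ♯ b = b ♯ a := by
  induction a using Ordinal.induction generalizing b with
  | h a IHa =>
  induction b using Ordinal.induction with
  | h b IHb =>
  refine le_antisymm (nadd_le_iff.2 ⟨fun a' ha => ?_, fun b' hb => ?_⟩)
    (nadd_le_iff.2 ⟨fun b' hb => ?_, fun a' ha => ?_⟩)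
  · rw [IHa a' ha]; exact nadd_lt_nadd_left ha b
  · rw [IHb b' hb]; exact nadd_lt_nadd_right hb a
  · rw [← IHb b' hb]; exact nadd_lt_nadd_left hb a
  · rw [← IHa a' ha]; exact nadd_lt_nadd_right ha b

theorem nadd_zero (a : Ordinal) : a ♯ 0 = a := by
  induction a using Ordinal.induction with
  | h a IH =>
  refine le_antisymm (nadd_le_iff.2 ⟨fun a' ha => ?_, fun c hc => ?_⟩) ?_
  · rw [IH a' ha]; exact ha
  · exact absurd hc not_lt_zero
  · refine le_of_forall_lt fun x hx => ?_
    rw [← IH x hx]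
    exact nadd_lt_nadd_right hx 0

theorem zero_nadd (a : Ordinal) : 0 ♯ a = a := by rw [nadd_comm, nadd_zero]

attribute [simp] nadd_zero zero_nadd

theorem le_self_nadd {a b : Ordinal} : a ≤ a ♯ b := by
  simpa using nadd_le_nadd_left (zero_le (a := b)) a

theorem nadd_one (a : Ordinal) : a ♯ 1 = Order.succ a := by
  induction a using Ordinal.induction with
  | h a IH =>
  refine le_antisymm (nadd_le_iff.2 ⟨fun a' ha => ?_, fun c hc => ?_⟩) ?_
  · rw [IH a' ha]; exact Order.succ_lt_succ ha
  · rw [Ordinal.lt_one_iff_zero.1 hc, nadd_zero]; exact Order.lt_succ a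
  · refine Order.succ_le_of_lt ?_
    simpa using nadd_lt_nadd_left (zero_lt_one' Ordinal) a

theorem add_le_nadd (a b : Ordinal) : a + b ≤ a ♯ b := by
  induction b using Ordinal.induction with
  | h b IH =>
  refine le_of_forall_lt fun x hx => ?_
  rcases lt_or_ge x a with h | h
  · exact h.trans_le le_self_nadd
  · have e := Ordinal.add_sub_cancel_of_le h
    have hlt : x - a < b := by
      rw [← e] at hx
      exact (add_lt_add_iff_left a).1 hx
    rw [← e]
    exact (IH _ hlt).trans_lt (nadd_lt_nadd_left hlt a)

theorem nadd_assoc (a b c : Ordinal) : a ♯ b ♯ c = a ♯ (b ♯ c) := by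
  induction a using Ordinal.induction generalizing b c with
  | h a IHa =>
  induction b using Ordinal.induction generalizing c with
  | h b IHb =>
  induction c using Ordinal.induction with
  | h c IHc =>
  refine le_antisymm (nadd_le_iff.2 ⟨fun x hx => ?_, fun c' hc => ?_⟩)
    (nadd_le_iff.2 ⟨fun a' ha => ?_, fun x hx => ?_⟩)
  · rcases lt_nadd_iff.1 hx with ⟨a', ha, h⟩ | ⟨b', hb, h⟩
    · refine (nadd_le_nadd_right h c).trans_lt ?_
      rw [IHa a' ha]; exact nadd_lt_nadd_right ha _
    · refine (nadd_le_nadd_right h c).trans_lt ?_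
      rw [IHb b' hb]; exact nadd_lt_nadd_left (nadd_lt_nadd_right hb c) a
  · rw [IHc c' hc]; exact nadd_lt_nadd_left (nadd_lt_nadd_left hc b) a
  · rw [← IHa a' ha]; exact nadd_lt_nadd_right (nadd_lt_nadd_right ha b) c
  · rcases lt_nadd_iff.1 hx with ⟨b', hb, h⟩ | ⟨c', hc, h⟩
    · refine (nadd_le_nadd_left h a).trans_lt ?_
      rw [← IHb b' hb]; exact nadd_lt_nadd_right (nadd_lt_nadd_left hb a) c
    · refine (nadd_le_nadd_left h a).trans_lt ?_
      rw [← IHc c' hc]; exact nadd_lt_nadd_left hc _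

theorem nadd_left_comm (a b c : Ordinal) : a ♯ (b ♯ c) = b ♯ (a ♯ c) := by
  rw [← nadd_assoc, nadd_comm a b, nadd_assoc]

instance nadd_assoc_inst : Std.Associative Ordinal.nadd := ⟨nadd_assoc⟩
instance nadd_comm_inst : Std.Commutative Ordinal.nadd := ⟨nadd_comm⟩

/-! natural multiplication -/

theorem nmul_def' (a b : Ordinal) : a ⨳ b =
    sInf {c | ∀ a' < a, ∀ b' < b, a' ⨳ b ♯ a ⨳ b' < c ♯ a' ⨳ b'} := by
  rw [nmul]

theorem nmul_nonempty (a b : Ordinal.{u}) :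
    {c : Ordinal.{u} | ∀ a' < a, ∀ b' < b, a' ⨳ b ♯ a ⨳ b' < c ♯ a' ⨳ b'}.Nonempty := by
  obtain ⟨c, hc⟩ : BddAbove ((fun x ↦ x.1 ⨳ b ♯ a ⨳ x.2) '' Set.Iio a ×ˢ Set.Iio b) :=
    bddAbove_of_small
  exact ⟨_, fun x hx y hy ↦
    (Order.lt_succ_of_le <| hc <| Set.mem_image_of_mem _ <| Set.mk_mem_prod hx hy).trans_le
      le_self_nadd⟩

theorem nmul_nadd_lt {a b a' b' : Ordinal} (ha : a' < a) (hb : b' < b) :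
    a' ⨳ b ♯ a ⨳ b' < a ⨳ b ♯ a' ⨳ b' := by
  rw [nmul_def' a b]
  exact csInf_mem (nmul_nonempty a b) a' ha b' hb

theorem nmul_le_iff {a b c : Ordinal} :
    a ⨳ b ≤ c ↔ ∀ a' < a, ∀ b' < b, a' ⨳ b ♯ a ⨳ b' < c ♯ a' ⨳ b' := by
  constructor
  · intro h a' ha b' hb
    exact (nmul_nadd_lt ha hb).trans_le (nadd_le_nadd_right h _)
  · intro h
    rw [nmul_def']
    exact csInf_le' h

theorem lt_nmul_iff {a b c : Ordinal} :
    c < a ⨳ b ↔ ∃ a' < a, ∃ b' < b, c ♯ a' ⨳ b' ≤ a' ⨳ b ♯ a ⨳ b' := by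
  rw [← not_le, nmul_le_iff]
  push_neg
  rfl

theorem nmul_nadd_le {a b a' b' : Ordinal} (ha : a' ≤ a) (hb : b' ≤ b) :
    a' ⨳ b ♯ a ⨳ b' ≤ a ⨳ b ♯ a' ⨳ b' := by
  rcases ha.eq_or_lt with rfl | ha
  · exact le_rfl
  rcases hb.eq_or_lt with rfl | hb
  · exact (nadd_comm _ _).le
  exact (nmul_nadd_lt ha hb).le

theorem nmul_zero (a : Ordinal) : a ⨳ 0 = 0 :=
  le_antisymm (nmul_le_iff.2 fun _ _ b hb => absurd hb not_lt_zero)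
    zero_le

theorem zero_nmul (a : Ordinal) : 0 ⨳ a = 0 :=
  le_antisymm (nmul_le_iff.2 fun b hb _ _ => absurd hb not_lt_zero)
    zero_le

attribute [simp] nmul_zero zero_nmul

theorem nmul_comm (a b : Ordinal) : a ⨳ b = b ⨳ a := by
  induction a using Ordinal.induction generalizing b with
  | h a IHa =>
  induction b using Ordinal.induction with
  | h b IHb =>
  refine le_antisymm (nmul_le_iff.2 fun a' ha b' hb => ?_) (nmul_le_iff.2 fun b' hb a' ha => ?_)
  · rw [IHa a' ha, IHb b' hb, IHa a' ha b', nadd_comm]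
    exact nmul_nadd_lt hb ha
  · rw [← IHa a' ha, ← IHb b' hb, ← IHa a' ha b', nadd_comm]
    exact nmul_nadd_lt ha hb

theorem nmul_lt_nmul_of_pos_left {a b c : Ordinal} (h₁ : a < b) (h₂ : 0 < c) :
    c ⨳ a < c ⨳ b := by
  simpa using nmul_nadd_lt h₂ h₁

theorem nmul_le_nmul_left {b c : Ordinal} (h : b ≤ c) (a : Ordinal) : a ⨳ b ≤ a ⨳ c := by
  rcases h.eq_or_lt with rfl | h
  · exact le_rfl
  rcases (zero_le (a := a)).eq_or_lt with rfl | ha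
  · simp
  · exact (nmul_lt_nmul_of_pos_left h ha).le

theorem one_nmul (a : Ordinal) : 1 ⨳ a = a := by
  induction a using Ordinal.induction with
  | h a IH =>
  refine le_antisymm (nmul_le_iff.2 fun a' ha b' hb => ?_) ?_
  · rw [Ordinal.lt_one_iff_zero.1 ha, IH b' hb]
    simpa using hb
  · refine le_of_forall_lt fun x hx => ?_
    rw [← IH x hx]
    exact nmul_lt_nmul_of_pos_left hx zero_lt_one

theorem nmul_one (a : Ordinal) : a ⨳ 1 = a := by rw [nmul_comm, one_nmul]

theorem nmul_nadd (a b c : Ordinal) : a ⨳ (b ♯ c) = a ⨳ b ♯ a ⨳ c := by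
  induction a using Ordinal.induction generalizing b c with
  | h a IHa =>
  induction b using Ordinal.induction generalizing c with
  | h b IHb =>
  induction c using Ordinal.induction with
  | h c IHc =>
  refine le_antisymm (nmul_le_iff.2 fun a' ha d hd => ?_)
    (nadd_le_iff.2 ⟨fun d hd => ?_, fun d hd => ?_⟩)
  · rcases lt_nadd_iff.1 hd with ⟨b', hb, hd⟩ | ⟨c', hc, hd⟩
    · have h := nadd_lt_nadd_of_lt_of_le (nmul_nadd_lt ha hb) (nmul_nadd_le ha.le hd)
      rw [IHa a' ha b' c, IHb b' hb c] at h
      rw [IHa a' ha b c]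
      refine lt_of_nadd_lt_nadd_right (a := a ⨳ b' ♯ a' ⨳ b') ?_
      calc _ = _ := by ac_rfl
        _ < _ := h
        _ = _ := by ac_rfl
    · have h := nadd_lt_nadd_of_lt_of_le (nmul_nadd_lt ha hc) (nmul_nadd_le ha.le hd)
      rw [IHa a' ha b c', IHc c' hc] at h
      rw [IHa a' ha b c]
      refine lt_of_nadd_lt_nadd_right (a := a ⨳ c' ♯ a' ⨳ c') ?_
      calc _ = _ := by ac_rfl
        _ < _ := h
        _ = _ := by ac_rfl
  · obtain ⟨a', ha, b', hb, hd⟩ := lt_nmul_iff.1 hd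
    have h := nmul_nadd_lt ha (nadd_lt_nadd_right hb c)
    rw [IHa a' ha b c, IHb b' hb c, IHa a' ha b' c] at h
    refine lt_of_nadd_lt_nadd_right (a := a' ⨳ b' ♯ a' ⨳ c) ?_
    calc _ = (d ♯ a' ⨳ b') ♯ (a ⨳ c ♯ a' ⨳ c) := by ac_rfl
      _ ≤ (a' ⨳ b ♯ a ⨳ b') ♯ (a ⨳ c ♯ a' ⨳ c) := nadd_le_nadd_right hd _
      _ = _ := by ac_rfl
      _ < _ := h
      _ = _ := by ac_rfl
  · obtain ⟨a', ha, c', hc, hd⟩ := lt_nmul_iff.1 hd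
    have h := nmul_nadd_lt ha (nadd_lt_nadd_left hc b)
    rw [IHa a' ha b c, IHc c' hc, IHa a' ha b c'] at h
    refine lt_of_nadd_lt_nadd_right (a := a' ⨳ c' ♯ a' ⨳ b) ?_
    calc _ = (d ♯ a' ⨳ c') ♯ (a ⨳ b ♯ a' ⨳ b) := by ac_rfl
      _ ≤ (a' ⨳ c ♯ a ⨳ c') ♯ (a ⨳ b ♯ a' ⨳ b) := nadd_le_nadd_right hd _
      _ = _ := by ac_rfl
      _ < _ := h
      _ = _ := by ac_rfl

theorem nadd_nmul (a b c : Ordinal) : (a ♯ b) ⨳ c = a ⨳ c ♯ b ⨳ c := by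
  rw [nmul_comm, nmul_nadd, nmul_comm, nmul_comm c]

theorem nadd_one_nmul (a b : Ordinal) : (a ♯ 1) ⨳ b = a ⨳ b ♯ b := by
  rw [nadd_nmul, one_nmul]

theorem mul_le_nmul (a b : Ordinal) : a * b ≤ a ⨳ b := by
  induction b using Ordinal.induction with
  | h b IH =>
  rcases eq_or_ne a 0 with rfl | ha
  · simp
  refine le_of_forall_lt fun x hx => ?_
  have hq : x / a < b := (Ordinal.div_lt ha).2 hx
  calc x = a * (x / a) + x % a := (Ordinal.div_add_mod x a).symm
    _ < a * (x / a) + a := (add_lt_add_iff_left _).2 (Ordinal.mod_lt x ha)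
    _ ≤ a ⨳ (x / a) + a := add_le_add_left (IH _ hq) a
    _ ≤ a ⨳ (x / a) ♯ a := add_le_nadd _ _
    _ = a ⨳ (x / a ♯ 1) := by rw [nmul_nadd, nmul_one]
    _ ≤ a ⨳ b := nmul_le_nmul_left (by rw [nadd_one]; exact Order.succ_le_of_lt hq) a

end Ordinal

open Polynomial

namespace HBTArith

theorem nadd_nadd_nadd_comm (a b c d : Ordinal) : (a ♯ b) ♯ (c ♯ d) = (a ♯ c) ♯ (b ♯ d) := by
  rw [nadd_assoc, nadd_left_comm b c d, ← nadd_assoc]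

/-- Joint key lemma: nadd-principality of `ω^c`, the mixed add/nadd identity, and
the successor identity. -/
theorem key (c : Ordinal) :
    (∀ y < ω ^ c, ∀ z < ω ^ c, y ♯ z < ω ^ c) ∧
    (∀ q : Ordinal, ∀ r < ω ^ c, ω ^ c * q ♯ r = ω ^ c * q + r) ∧
    (∀ q : Ordinal, ω ^ c * q ♯ ω ^ c = ω ^ c * (q + 1)) := by
  induction c using Ordinal.induction with
  | h c IH =>
  have hocpos : (0:Ordinal) < ω ^ c := opow_pos c omega0_pos
  have hocne : (ω ^ c : Ordinal) ≠ 0 := hocpos.ne'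
  -- first: P
  have P : ∀ y < ω ^ c, ∀ z < ω ^ c, y ♯ z < ω ^ c := by
    rcases Ordinal.zero_or_succ_or_isSuccLimit c with hc | ⟨c₀, hc⟩ | hc
    · subst hc
      intro y hy z hz
      simp only [opow_zero, Ordinal.lt_one_iff_zero] at hy hz ⊢
      subst hy; subst hz; simp
    · subst hc
      have hc₀ : c₀ < Order.succ c₀ := Order.lt_succ c₀
      obtain ⟨P₀, D₀, N₀⟩ := IH c₀ hc₀
      have hne₀ : (ω ^ c₀ : Ordinal) ≠ 0 := (opow_pos c₀ omega0_pos).ne'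
      have N2 : ∀ (q : Ordinal) (n : ℕ), ω ^ c₀ * q ♯ ω ^ c₀ * n = ω ^ c₀ * (q + n) := by
        intro q n
        induction n with
        | zero => simp
        | succ n ihn =>
          have hcast : ((n+1 : ℕ) : Ordinal) = (n : Ordinal) + 1 := by push_cast; ring
          calc ω ^ c₀ * q ♯ ω ^ c₀ * ((n+1:ℕ) : Ordinal)
              = ω ^ c₀ * q ♯ (ω ^ c₀ * (n:Ordinal) ♯ ω ^ c₀) := by rw [hcast, ← N₀ (n:Ordinal)]
            _ = (ω ^ c₀ * q ♯ ω ^ c₀ * (n:Ordinal)) ♯ ω ^ c₀ := (nadd_assoc _ _ _).symm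
            _ = ω ^ c₀ * (q + (n:Ordinal)) ♯ ω ^ c₀ := by rw [ihn]
            _ = ω ^ c₀ * (q + (n:Ordinal) + 1) := N₀ _
            _ = ω ^ c₀ * (q + ((n+1:ℕ) : Ordinal)) := by rw [hcast, add_assoc]
      intro y hy z hz
      rw [opow_succ] at hy hz ⊢
      have hyd : y / ω ^ c₀ < ω := (Ordinal.div_lt hne₀).2 hy
      have hzd : z / ω ^ c₀ < ω := (Ordinal.div_lt hne₀).2 hz
      obtain ⟨a, ha⟩ := Ordinal.lt_omega0.1 hyd
      obtain ⟨b, hb⟩ := Ordinal.lt_omega0.1 hzd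
      have hymod := Ordinal.mod_lt y hne₀
      have hzmod := Ordinal.mod_lt z hne₀
      have hy' : y = ω ^ c₀ * a ♯ y % ω ^ c₀ := by
        rw [D₀ _ _ hymod, ← ha, Ordinal.div_add_mod]
      have hz' : z = ω ^ c₀ * b ♯ z % ω ^ c₀ := by
        rw [D₀ _ _ hzmod, ← hb, Ordinal.div_add_mod]
      have hw : y % ω ^ c₀ ♯ z % ω ^ c₀ < ω ^ c₀ := P₀ _ hymod _ hzmod
      calc y ♯ z = (ω ^ c₀ * a ♯ y % ω ^ c₀) ♯ (ω ^ c₀ * b ♯ z % ω ^ c₀) := by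
            conv_lhs => rw [hy', hz']
        _ = (ω ^ c₀ * a ♯ ω ^ c₀ * b) ♯ (y % ω ^ c₀ ♯ z % ω ^ c₀) := nadd_nadd_nadd_comm _ _ _ _
        _ = ω ^ c₀ * ((a:Ordinal) + b) ♯ (y % ω ^ c₀ ♯ z % ω ^ c₀) := by rw [N2 (a : Ordinal) b]
        _ = ω ^ c₀ * ((a:Ordinal) + b) + (y % ω ^ c₀ ♯ z % ω ^ c₀) := D₀ _ _ hw
        _ < ω ^ c₀ * ((a:Ordinal) + b) + ω ^ c₀ := (add_lt_add_iff_left _).2 hw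
        _ = ω ^ c₀ * ((a:Ordinal) + b + 1) := by
            rw [mul_add (ω ^ c₀) ((a:Ordinal) + b) 1, mul_one]
        _ ≤ ω ^ c₀ * ω := by
            apply mul_le_mul_right
            have : ((a:Ordinal) + b + 1) < ω := by
              exact_mod_cast nat_lt_omega0 (a + b + 1)
            exact this.le
    · -- limit case
      intro y hy z hz
      rcases eq_or_ne y 0 with rfl | hy0
      · simpa using hz
      rcases eq_or_ne z 0 with rfl | hz0
      · simpa using hy
      have hly : log ω y < c := by
        by_contra hh
        push_neg at hh
        exact absurd ((opow_le_opow_right omega0_pos hh).trans (opow_log_le_self ω hy0))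
          (not_le.mpr hy)
      have hlz : log ω z < c := by
        by_contra hh
        push_neg at hh
        exact absurd ((opow_le_opow_right omega0_pos hh).trans (opow_log_le_self ω hz0))
          (not_le.mpr hz)
      set c' := max (log ω y) (log ω z) + 1 with hc'
      have hc'c : c' < c := by
        have := hc.succ_lt (max_lt hly hlz)
        rwa [Order.succ_eq_add_one] at this
      obtain ⟨P', _, _⟩ := IH c' hc'c
      have hyy : y < ω ^ c' := lt_of_lt_of_le (lt_opow_succ_log_self one_lt_omega0 y)
        (opow_le_opow_right omega0_pos (by
          rw [Order.succ_eq_add_one]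
          exact add_le_add_left (le_max_left _ _) 1))
      have hzz : z < ω ^ c' := lt_of_lt_of_le (lt_opow_succ_log_self one_lt_omega0 z)
        (opow_le_opow_right omega0_pos (by
          rw [Order.succ_eq_add_one]
          exact add_le_add_left (le_max_right _ _) 1))
      exact (P' y hyy z hzz).trans_le (opow_le_opow_right omega0_pos hc'c.le)
  -- second: D
  have D : ∀ q : Ordinal, ∀ r < ω ^ c, ω ^ c * q ♯ r = ω ^ c * q + r := by
    intro q
    induction q using Ordinal.induction with
    | h q IHq =>
    intro r hr
    induction r using Ordinal.induction with
    | h r IHr =>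
    refine le_antisymm (nadd_le_iff.2 ⟨?_, ?_⟩) (add_le_nadd _ _)
    · intro x' hx'
      have hq₁ : x' / ω ^ c < q := (Ordinal.div_lt hocne).2 hx'
      have hr₁ : x' % ω ^ c < ω ^ c := Ordinal.mod_lt x' hocne
      have hx'eq : x' = ω ^ c * (x' / ω ^ c) ♯ x' % ω ^ c := by
        rw [IHq _ hq₁ _ hr₁, Ordinal.div_add_mod]
      have hw : x' % ω ^ c ♯ r < ω ^ c := P _ hr₁ _ hr
      calc x' ♯ r = ω ^ c * (x' / ω ^ c) ♯ (x' % ω ^ c ♯ r) := by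
            conv_lhs => rw [hx'eq]
            rw [nadd_assoc]
        _ = ω ^ c * (x' / ω ^ c) + (x' % ω ^ c ♯ r) := IHq _ hq₁ _ hw
        _ < ω ^ c * (x' / ω ^ c) + ω ^ c := (add_lt_add_iff_left _).2 hw
        _ = ω ^ c * (x' / ω ^ c + 1) := by rw [mul_add (ω ^ c) (x' / ω ^ c) 1, mul_one]
        _ ≤ ω ^ c * q := mul_le_mul_right (Order.add_one_le_iff.mpr hq₁) _
        _ ≤ ω ^ c * q + r := le_add_of_nonneg_right zero_le
    · intro r' hr'
      rw [IHr r' hr' (hr'.trans hr)]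
      exact (add_lt_add_iff_left _).2 hr'
  -- third: N
  have N : ∀ q : Ordinal, ω ^ c * q ♯ ω ^ c = ω ^ c * (q + 1) := by
    intro q
    induction q using Ordinal.induction with
    | h q IHq =>
    refine le_antisymm (nadd_le_iff.2 ⟨?_, ?_⟩) ?_
    · intro x' hx'
      have hq₁ : x' / ω ^ c < q := (Ordinal.div_lt hocne).2 hx'
      have hr₁ : x' % ω ^ c < ω ^ c := Ordinal.mod_lt x' hocne
      have hx'eq : x' = ω ^ c * (x' / ω ^ c) ♯ x' % ω ^ c := by
        rw [D _ _ hr₁, Ordinal.div_add_mod]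
      calc x' ♯ ω ^ c = (ω ^ c * (x' / ω ^ c) ♯ ω ^ c) ♯ x' % ω ^ c := by
            conv_lhs => rw [hx'eq]
            rw [nadd_assoc, nadd_comm (x' % ω ^ c), ← nadd_assoc]
        _ = ω ^ c * (x' / ω ^ c + 1) ♯ x' % ω ^ c := by rw [IHq _ hq₁]
        _ = ω ^ c * (x' / ω ^ c + 1) + x' % ω ^ c := D _ _ hr₁
        _ < ω ^ c * (x' / ω ^ c + 1) + ω ^ c := (add_lt_add_iff_left _).2 hr₁
        _ = ω ^ c * (x' / ω ^ c + 1 + 1) := by rw [mul_add (ω ^ c) (x' / ω ^ c + 1) 1, mul_one]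
        _ ≤ ω ^ c * (q + 1) := by
            apply mul_le_mul_right
            exact add_le_add_left (Order.add_one_le_iff.mpr hq₁) 1
    · intro z' hz'
      rw [D q z' hz', mul_add (ω ^ c) q 1, mul_one]
      exact (add_lt_add_iff_left _).2 hz'
    · rw [mul_add (ω ^ c) q 1, mul_one]
      exact add_le_nadd _ _
  exact ⟨P, D, N⟩

theorem nadd_lt_opow {c y z : Ordinal} (hy : y < ω ^ c) (hz : z < ω ^ c) : y ♯ z < ω ^ c :=
  (key c).1 y hy z hz

theorem mul_nadd_eq {c q r : Ordinal} (hr : r < ω ^ c) : ω ^ c * q ♯ r = ω ^ c * q + r :=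
  (key c).2.1 q r hr

theorem mul_nadd_opow (c q : Ordinal) : ω ^ c * q ♯ ω ^ c = ω ^ c * (q + 1) :=
  (key c).2.2 q

/-- `x ♯ y < x + ω^c` whenever `y < ω^c`. -/
theorem nadd_lt_add_opow {c y : Ordinal} (hy : y < ω ^ c) (x : Ordinal) :
    x ♯ y < x + ω ^ c := by
  have hocne : (ω ^ c : Ordinal) ≠ 0 := (opow_pos c omega0_pos).ne'
  have hmod : x % ω ^ c < ω ^ c := Ordinal.mod_lt x hocne
  have hx : x = ω ^ c * (x / ω ^ c) ♯ x % ω ^ c := by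
    rw [mul_nadd_eq hmod, Ordinal.div_add_mod]
  have hw : x % ω ^ c ♯ y < ω ^ c := nadd_lt_opow hmod hy
  have h1 : x ♯ y = ω ^ c * (x / ω ^ c) + (x % ω ^ c ♯ y) := by
    conv_lhs => rw [hx]
    rw [nadd_assoc, mul_nadd_eq hw]
  have h2 : x + ω ^ c = ω ^ c * (x / ω ^ c) + ω ^ c := by
    conv_lhs => rw [hx]
    rw [mul_nadd_eq hmod, add_assoc, Ordinal.add_absorp hmod le_rfl]
  rw [h1, h2]
  exact (add_lt_add_iff_left _).2 hw


/-- every nonzero ordinal ends with an `ω`-power. -/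
theorem exists_add_opow : ∀ {δ : Ordinal}, δ ≠ 0 → ∃ (δ₀ c : Ordinal), δ = δ₀ + ω ^ c := by
  intro δ
  induction δ using Ordinal.induction with
  | h δ IH =>
  intro hδ
  set l := log ω δ with hl
  have hne : (ω ^ l : Ordinal) ≠ 0 := (opow_pos l omega0_pos).ne'
  have hdm := Ordinal.div_add_mod δ (ω ^ l)
  by_cases hr : δ % ω ^ l = 0
  · have hq : δ / ω ^ l < ω := by
      refine (Ordinal.div_lt hne).2 ?_
      have := lt_opow_succ_log_self one_lt_omega0 δ
      rwa [opow_succ] at this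
    obtain ⟨n, hn⟩ := Ordinal.lt_omega0.1 hq
    have hn0 : n ≠ 0 := by
      rintro rfl
      rw [hr, add_zero, hn] at hdm
      simp at hdm
      exact hδ hdm.symm
    obtain ⟨m, rfl⟩ := Nat.exists_eq_succ_of_ne_zero hn0
    refine ⟨ω ^ l * m, l, ?_⟩
    have : ((m+1 : ℕ) : Ordinal) = (m : Ordinal) + 1 := by push_cast; ring
    conv_lhs => rw [← hdm]
    rw [hr, add_zero, hn]
    rw [show ((Nat.succ m : ℕ) : Ordinal) = (m : Ordinal) + 1 from this, mul_add, mul_one]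
  · have hrlt : δ % ω ^ l < ω ^ l := Ordinal.mod_lt δ hne
    have hrδ : δ % ω ^ l < δ := hrlt.trans_le (opow_log_le_self ω hδ)
    obtain ⟨r₀, c, hrc⟩ := IH _ hrδ hr
    refine ⟨ω ^ l * (δ / ω ^ l) + r₀, c, ?_⟩
    conv_lhs => rw [← hdm]
    rw [hrc, add_assoc]

theorem nat_nmul_opow (c : Ordinal) (n : ℕ) : (n : Ordinal) ⨳ ω ^ c = ω ^ c * n := by
  induction n with
  | zero => simp
  | succ n ih =>
    have hcast : ((n+1:ℕ):Ordinal) = (n:Ordinal) ♯ 1 := by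
      rw [nadd_one, Order.succ_eq_add_one]; push_cast; ring
    rw [hcast, nadd_one_nmul, ih, mul_nadd_opow, nadd_one, Order.succ_eq_add_one]

theorem nat_nmul_lt_opow {c x : Ordinal} (h : x < ω ^ c) (n : ℕ) :
    (n:Ordinal) ⨳ x < ω ^ c := by
  induction n with
  | zero => simpa using opow_pos c omega0_pos
  | succ n ih =>
    have hcast : ((n+1:ℕ):Ordinal) = (n:Ordinal) ♯ 1 := by
      rw [nadd_one, Order.succ_eq_add_one]; push_cast; ring
    rw [hcast, nadd_one_nmul]
    exact nadd_lt_opow ih h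

theorem nmul_natCast_left_comm (a x : Ordinal) (n : ℕ) :
    a ⨳ ((n : Ordinal) ⨳ x) = (n : Ordinal) ⨳ (a ⨳ x) := by
  induction n with
  | zero => simp
  | succ n ih =>
    have hcast : ((n+1:ℕ):Ordinal) = (n:Ordinal) ♯ 1 := by
      rw [nadd_one, Order.succ_eq_add_one]; push_cast; rfl
    rw [hcast, nadd_one_nmul, nadd_one_nmul, nmul_nadd, ih]

theorem omega_nmul_key (c : Ordinal) :
    (∀ r < ω ^ c, ω ⨳ r < ω ^ (c+1)) ∧ ω ⨳ ω ^ c = ω ^ (c+1) := by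
  induction c using Ordinal.induction with
  | h c IH =>
  have hocpos : (0:Ordinal) < ω ^ c := opow_pos c omega0_pos
  have Q2 : ∀ r < ω ^ c, ω ⨳ r < ω ^ (c+1) := by
    intro r hr
    rcases eq_or_ne r 0 with rfl | hr0
    · simpa using opow_pos (c+1) omega0_pos
    set l := log ω r with hldef
    have hlc : l < c := by
      by_contra hh
      push_neg at hh
      exact absurd ((opow_le_opow_right omega0_pos hh).trans (opow_log_le_self ω hr0))
        (not_le.mpr hr)
    have hne : (ω ^ l : Ordinal) ≠ 0 := (opow_pos l omega0_pos).ne'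
    have hm : r / ω ^ l < ω := by
      refine (Ordinal.div_lt hne).2 ?_
      have := lt_opow_succ_log_self one_lt_omega0 r
      rwa [opow_succ] at this
    obtain ⟨n, hn⟩ := Ordinal.lt_omega0.1 hm
    have hmod : r % ω ^ l < ω ^ l := Ordinal.mod_lt r hne
    have hr' : r = ω ^ l * n ♯ r % ω ^ l := by
      rw [mul_nadd_eq hmod, ← hn, Ordinal.div_add_mod]
    have hQ3l : ω ⨳ ω ^ l = ω ^ (l+1) := (IH l hlc).2
    have h2 : ω ⨳ (ω ^ l * (n:Ordinal)) = ω ^ (l+1) * n := by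
      rw [← nat_nmul_opow l n, nmul_natCast_left_comm, hQ3l, nat_nmul_opow]
    have h3 : ω ⨳ (r % ω ^ l) < ω ^ (l+1) := (IH l hlc).1 _ hmod
    have h1 : ω ⨳ r = ω ^ (l+1) * n ♯ ω ⨳ (r % ω ^ l) := by
      conv_lhs => rw [hr']
      rw [nmul_nadd, h2]
    rw [h1]
    calc ω ^ (l+1) * n ♯ ω ⨳ (r % ω ^ l) = ω ^ (l+1) * n + ω ⨳ (r % ω ^ l) :=
          mul_nadd_eq h3
      _ < ω ^ (l+1) * n + ω ^ (l+1) := (add_lt_add_iff_left _).2 h3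
      _ = ω ^ (l+1) * ((n:Ordinal) + 1) := by rw [mul_add (ω ^ (l+1)) (n:Ordinal) 1, mul_one]
      _ < ω ^ (l+1) * ω := by
          refine mul_lt_mul_of_pos_left ?_ (opow_pos (l+1) omega0_pos)
          exact_mod_cast nat_lt_omega0 (n+1)
      _ = ω ^ (l+1+1) := by rw [← opow_succ, Order.succ_eq_add_one]
      _ ≤ ω ^ (c+1) := by
          apply opow_le_opow_right omega0_pos
          have : l + 1 ≤ c := Order.add_one_le_iff.mpr hlc
          exact add_le_add_left this 1
  have Q3 : ω ⨳ ω ^ c = ω ^ (c+1) := by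
    refine le_antisymm (nmul_le_iff.2 ?_) ?_
    · intro a' ha' b' hb'
      obtain ⟨n, rfl⟩ := Ordinal.lt_omega0.1 ha'
      have h1 : (n:Ordinal) ⨳ ω ^ c < ω ^ (c+1) := by
        rw [nat_nmul_opow]
        calc ω ^ c * (n:Ordinal) < ω ^ c * ω :=
              mul_lt_mul_of_pos_left (nat_lt_omega0 n) hocpos
          _ = ω ^ (c+1) := by rw [← opow_succ, Order.succ_eq_add_one]
      exact lt_of_lt_of_le (nadd_lt_opow h1 (Q2 b' hb')) (le_self_nadd)
    · calc ω ^ (c+1) = ω ^ c * ω := by rw [← opow_succ, Order.succ_eq_add_one]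
        _ ≤ ω ^ c ⨳ ω := mul_le_nmul (ω ^ c) ω
        _ = ω ⨳ ω ^ c := nmul_comm _ _
  exact ⟨Q2, Q3⟩

theorem omega_nmul_add_opow (x c : Ordinal) :
    ω ⨳ x + ω ^ (c+1) ≤ ω ⨳ (x + ω ^ c) := by
  have hne : (ω ^ c : Ordinal) ≠ 0 := (opow_pos c omega0_pos).ne'
  have hmod : x % ω ^ c < ω ^ c := Ordinal.mod_lt x hne
  have hx : x = ω ^ c * (x / ω ^ c) ♯ x % ω ^ c := by
    rw [mul_nadd_eq hmod, Ordinal.div_add_mod]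
  have hxc : x + ω ^ c = ω ^ c * (x / ω ^ c) ♯ ω ^ c := by
    conv_lhs => rw [hx, mul_nadd_eq hmod, add_assoc, Ordinal.add_absorp hmod le_rfl]
    rw [mul_nadd_opow]
    rw [mul_add (ω ^ c) (x / ω ^ c) 1, mul_one]
  have hs : ω ⨳ (x % ω ^ c) < ω ^ (c+1) := (omega_nmul_key c).1 _ hmod
  have hWx : ω ⨳ x = ω ⨳ (ω ^ c * (x / ω ^ c)) ♯ ω ⨳ (x % ω ^ c) := by
    conv_lhs => rw [hx]
    rw [nmul_nadd]
  have hlt : ω ⨳ x < ω ⨳ (ω ^ c * (x / ω ^ c)) + ω ^ (c+1) := by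
    rw [hWx]; exact nadd_lt_add_opow hs _
  have habs : ω ⨳ x + ω ^ (c+1) ≤ ω ⨳ (ω ^ c * (x / ω ^ c)) + ω ^ (c+1) := by
    rcases le_total (ω ⨳ x) (ω ⨳ (ω ^ c * (x / ω ^ c))) with h | h
    · exact add_le_add_left h _
    · have hcan := Ordinal.add_sub_cancel_of_le h
      have ht : ω ⨳ x - ω ⨳ (ω ^ c * (x / ω ^ c)) < ω ^ (c+1) := by
        rw [← hcan] at hlt
        exact (add_lt_add_iff_left _).1 hlt
      calc ω ⨳ x + ω ^ (c+1)
          = ω ⨳ (ω ^ c * (x / ω ^ c)) + (ω ⨳ x - ω ⨳ (ω ^ c * (x / ω ^ c))) + ω ^ (c+1) := by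
            rw [hcan]
        _ = ω ⨳ (ω ^ c * (x / ω ^ c)) + ((ω ⨳ x - ω ⨳ (ω ^ c * (x / ω ^ c))) + ω ^ (c+1)) := by
            rw [add_assoc]
        _ = ω ⨳ (ω ^ c * (x / ω ^ c)) + ω ^ (c+1) := by
            rw [Ordinal.add_absorp ht le_rfl]
        _ ≤ ω ⨳ (ω ^ c * (x / ω ^ c)) + ω ^ (c+1) := le_rfl
  calc ω ⨳ x + ω ^ (c+1) ≤ ω ⨳ (ω ^ c * (x / ω ^ c)) + ω ^ (c+1) := habs
    _ ≤ ω ⨳ (ω ^ c * (x / ω ^ c)) ♯ ω ^ (c+1) := add_le_nadd _ _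
    _ = ω ⨳ (ω ^ c * (x / ω ^ c)) ♯ ω ⨳ ω ^ c := by rw [(omega_nmul_key c).2]
    _ = ω ⨳ (ω ^ c * (x / ω ^ c) ♯ ω ^ c) := (nmul_nadd _ _ _).symm
    _ = ω ⨳ (x + ω ^ c) := by rw [← hxc]

theorem core_ineq (n : ℕ) : ∀ {δ : Ordinal}, δ ≠ 0 → ∀ γ : Ordinal,
    (n:Ordinal) ⨳ δ ♯ ω ⨳ γ < ω ⨳ (γ + δ) := by
  intro δ
  induction δ using Ordinal.induction with
  | h δ IHδ =>
  intro hδ γ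
  obtain ⟨δ₀, c, rfl⟩ := exists_add_opow hδ
  have hδ₀lt : δ₀ < δ₀ + ω ^ c := lt_add_of_pos_right _ (opow_pos c omega0_pos)
  have step1 : (n:Ordinal) ⨳ δ₀ ♯ ω ⨳ γ ≤ ω ⨳ (γ + δ₀) := by
    rcases eq_or_ne δ₀ 0 with rfl | h0
    · simp
    · exact (IHδ δ₀ hδ₀lt h0 γ).le
  have step2 : (n:Ordinal) ⨳ (δ₀ + ω ^ c) ≤ (n:Ordinal) ⨳ δ₀ ♯ (n:Ordinal) ⨳ ω ^ c := by
    calc (n:Ordinal) ⨳ (δ₀ + ω ^ c) ≤ (n:Ordinal) ⨳ (δ₀ ♯ ω ^ c) :=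
          nmul_le_nmul_left (add_le_nadd _ _) _
      _ = _ := nmul_nadd _ _ _
  have h3 : (n:Ordinal) ⨳ ω ^ c < ω ^ (c+1) := by
    rw [nat_nmul_opow]
    calc ω ^ c * (n:Ordinal) < ω ^ c * ω :=
          mul_lt_mul_of_pos_left (nat_lt_omega0 n) (opow_pos c omega0_pos)
      _ = ω ^ (c+1) := by rw [← opow_succ, Order.succ_eq_add_one]
  calc (n:Ordinal) ⨳ (δ₀ + ω ^ c) ♯ ω ⨳ γ
      ≤ ((n:Ordinal) ⨳ δ₀ ♯ (n:Ordinal) ⨳ ω ^ c) ♯ ω ⨳ γ := nadd_le_nadd_right step2 _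
    _ = ((n:Ordinal) ⨳ δ₀ ♯ ω ⨳ γ) ♯ (n:Ordinal) ⨳ ω ^ c := by
        rw [nadd_assoc, nadd_comm ((n:Ordinal) ⨳ ω ^ c), ← nadd_assoc]
    _ ≤ ω ⨳ (γ + δ₀) ♯ (n:Ordinal) ⨳ ω ^ c := nadd_le_nadd_right step1 _
    _ < ω ⨳ (γ + δ₀) + ω ^ (c+1) := nadd_lt_add_opow h3 _
    _ ≤ ω ⨳ (γ + δ₀ + ω ^ c) := omega_nmul_add_opow _ c
    _ = ω ⨳ (γ + (δ₀ + ω ^ c)) := by rw [add_assoc]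

/-- The measure inequality. -/
theorem meas_key {b γ : Ordinal} (h : γ < b) (n : ℕ) :
    (n:Ordinal) ⨳ (b - γ) ♯ ω ⨳ γ < ω ⨳ b := by
  have h1 : γ + (b - γ) = b := Ordinal.add_sub_cancel_of_le h.le
  have h2 : b - γ ≠ 0 := by
    intro h0
    rw [h0, add_zero] at h1
    exact h.ne h1
  have := core_ineq n h2 γ
  rwa [h1] at this

theorem sub_lt_sub_right' {b γ β : Ordinal} (h1 : b ≤ γ) (h2 : γ < β) : γ - b < β - b := by
  by_contra hh
  push_neg at hh
  have := add_le_add_right hh b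
  rw [Ordinal.add_sub_cancel_of_le h1, Ordinal.add_sub_cancel_of_le (h1.trans h2.le)] at this
  exact absurd this (not_le.mpr h2)

theorem sub_le_sub_right' {γ β : Ordinal} (h : γ ≤ β) (b : Ordinal) : γ - b ≤ β - b := by
  rw [Ordinal.sub_le]
  exact h.trans (Ordinal.le_add_sub _ _)

theorem sub_nadd_sub {ν β b b' : Ordinal} (hν : ν ≤ β) (hb : b' ≤ b) :
    ν - b' ≤ (b - b') ♯ (β - b) := by
  rw [Ordinal.sub_le]
  calc ν ≤ β := hν
    _ ≤ b + (β - b) := Ordinal.le_add_sub _ _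
    _ = b' + (b - b') + (β - b) := by rw [Ordinal.add_sub_cancel_of_le hb]
    _ = b' + ((b - b') + (β - b)) := add_assoc _ _ _
    _ ≤ b' + ((b - b') ♯ (β - b)) := add_le_add_right (add_le_nadd _ _) _

end HBTArith

namespace HBT

section AG
variable (A : Type*) {M : Type*} [Ring A] [AddCommGroup M] [Module A M]

/-- The submodule spanned by the entries of a list. -/
noncomputable def spanL (σ : List M) : Submodule A M := Submodule.span A {y | y ∈ σ}

theorem spanL_append (σ : List M) (x : M) :
    spanL A (σ ++ [x]) = spanL A σ ⊔ Submodule.span A {x} := by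
  unfold spanL
  rw [← Submodule.span_union]
  congr 1
  ext y
  simp [List.mem_append, or_comm]

theorem spanL_mono {σ σ' : List M} (h : ∀ y ∈ σ, y ∈ σ') : spanL A σ ≤ spanL A σ' :=
  Submodule.span_mono h

theorem mem_spanL_self {σ : List M} {x : M} (h : x ∈ σ) : x ∈ spanL A σ :=
  Submodule.subset_span h

theorem goodList_append_iff (σ : List M) (x : M) :
    GoodList A (σ ++ [x]) ↔ x ∈ spanL A σ := by
  constructor
  · rintro ⟨l, y, heq, hy⟩
    obtain ⟨h1, h2⟩ := List.append_inj' heq rfl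
    obtain rfl : x = y := by simpa using h2
    subst h1
    exact hy
  · intro h
    exact ⟨σ, x, rfl, h⟩

theorem alphaGood_iff (α : Ordinal) (σ : List M) :
    AlphaGood A α σ ↔
      ∀ x : M, GoodList A (σ ++ [x]) ∨ ∃ (β : Ordinal) (_ : β < α), AlphaGood A β (σ ++ [x]) := by
  rw [AlphaGood]

theorem alphaGood_mono :
    ∀ (α : Ordinal) (α' : Ordinal) (σ σ' : List M), AlphaGood A α σ →
      spanL A σ ≤ spanL A σ' → α ≤ α' → AlphaGood A α' σ' := by
  intro α
  induction α using Ordinal.induction with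
  | h α IH =>
  intro α' σ σ' h hs hα
  rw [alphaGood_iff] at h ⊢
  intro x
  rcases h x with hg | ⟨β, hβ, hAG⟩
  · left
    rw [goodList_append_iff] at hg ⊢
    exact hs hg
  · right
    refine ⟨β, hβ.trans_le hα, ?_⟩
    refine IH β hβ β (σ ++ [x]) (σ' ++ [x]) hAG ?_ le_rfl
    rw [spanL_append, spanL_append]
    exact sup_le_sup_right hs _

theorem alphaGood_step {α : Ordinal} {σ : List M} (h : AlphaGood A α σ) {x : M}
    (hx : x ∉ spanL A σ) : ∃ (β : Ordinal), β < α ∧ AlphaGood A β (σ ++ [x]) := by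
  rw [alphaGood_iff] at h
  rcases h x with hg | ⟨β, hβ, hAG⟩
  · exact absurd ((goodList_append_iff A σ x).1 hg) hx
  · exact ⟨β, hβ, hAG⟩

end AG

/-! ### finite natural sums -/

noncomputable def nsumBelow (f : ℕ → Ordinal) : ℕ → Ordinal
  | 0 => 0
  | n+1 => nsumBelow f n ♯ f n

theorem nsum_le {f g : ℕ → Ordinal} : ∀ {n : ℕ}, (∀ d < n, f d ≤ g d) →
    nsumBelow f n ≤ nsumBelow g n := by
  intro n
  induction n with
  | zero => intro _; exact le_rfl
  | succ n ih =>
    intro h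
    exact nadd_le_nadd (ih fun d hd => h d (hd.trans (Nat.lt_succ_self n)))
      (h n (Nat.lt_succ_self n))

theorem nsum_lt {f g : ℕ → Ordinal} : ∀ {n : ℕ}, (∀ d < n, f d ≤ g d) →
    ∀ {e : ℕ}, e < n → f e < g e → nsumBelow f n < nsumBelow g n := by
  intro n
  induction n with
  | zero => intro _ e he; exact absurd he (Nat.not_lt_zero e)
  | succ n ih =>
    intro h e he hfe
    rcases Nat.lt_succ_iff_lt_or_eq.1 he with he' | rfl
    · exact nadd_lt_nadd_of_lt_of_le
        (ih (fun d hd => h d (hd.trans (Nat.lt_succ_self n))) he' hfe)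
        (h n (Nat.lt_succ_self n))
    · exact nadd_lt_nadd_of_le_of_lt
        (nsum_le fun d hd => h d (hd.trans (Nat.lt_succ_self e))) hfe

theorem nsum_eq_zero_tail {f : ℕ → Ordinal} {D : ℕ} : ∀ {n : ℕ}, D ≤ n →
    (∀ d, D ≤ d → f d = 0) → nsumBelow f n = nsumBelow f D := by
  intro n
  induction n with
  | zero => intro h _; rw [Nat.le_zero.1 h]
  | succ n ih =>
    intro h h0
    rcases Nat.lt_succ_iff_lt_or_eq.1 (Nat.lt_succ_of_le h) with h' | rfl
    · show nsumBelow f n ♯ f n = _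
      rw [h0 n (by omega), nadd_zero]
      exact ih (by omega) h0
    · rfl

theorem nsum_le_nmul {f : ℕ → Ordinal} {x : Ordinal} : ∀ {n : ℕ}, (∀ d < n, f d ≤ x) →
    nsumBelow f n ≤ (n : Ordinal) ⨳ x := by
  intro n
  induction n with
  | zero => intro _; simp [nsumBelow]
  | succ n ih =>
    intro h
    have hcast : ((n+1:ℕ):Ordinal) = (n:Ordinal) ♯ 1 := by
      rw [nadd_one, Order.succ_eq_add_one]; push_cast; ring
    rw [hcast, nadd_one_nmul]
    exact nadd_le_nadd (ih fun d hd => h d (hd.trans (Nat.lt_succ_self n)))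
      (h n (Nat.lt_succ_self n))

theorem nsum_nadd (f g : ℕ → Ordinal) : ∀ n : ℕ,
    nsumBelow (fun d => f d ♯ g d) n = nsumBelow f n ♯ nsumBelow g n := by
  intro n
  induction n with
  | zero => simp [nsumBelow]
  | succ n ih =>
    show nsumBelow (fun d => f d ♯ g d) n ♯ (f n ♯ g n) = _
    rw [ih]
    exact HBTArith.nadd_nadd_nadd_comm _ _ _ _

/-! ### the measure -/

noncomputable def Meas (D : ℕ) (β : ℕ → Ordinal) : Ordinal :=
  ω ⨳ β D ♯ nsumBelow (fun d => β d - β D) D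

theorem meas_lt_same_base {D : ℕ} {β β' : ℕ → Ordinal} (e : ℕ) (he : e < D)
    (hkeep : ∀ d < D, β' d ≤ β d) (hbase : β D ≤ β' e) (hstrict : β' e < β e)
    (hD : β' D = β D) : Meas D β' < Meas D β := by
  unfold Meas
  rw [hD]
  refine nadd_lt_nadd_left ?_ _
  refine nsum_lt (fun d hd => HBTArith.sub_le_sub_right' (hkeep d hd) _) he ?_
  exact HBTArith.sub_lt_sub_right' hbase hstrict

theorem meas_lt_smaller_base {D D' : ℕ} {β β' : ℕ → Ordinal} (hDD' : D ≤ D')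
    (hb : β' D' < β D) (hle : ∀ d < D', β' d ≤ β d)
    (hβconst : ∀ d, D ≤ d → β d = β D) : Meas D' β' < Meas D β := by
  unfold Meas
  set b := β D with hbdef
  set b' := β' D' with hb'def
  have h1 : nsumBelow (fun d => β' d - b') D' ≤
      nsumBelow (fun d => (b - b') ♯ (β d - b)) D' :=
    nsum_le fun d _ => HBTArith.sub_nadd_sub (hle d ‹_›) hb.le
  have h2 : nsumBelow (fun d => (b - b') ♯ (β d - b)) D' =
      nsumBelow (fun _ => b - b') D' ♯ nsumBelow (fun d => β d - b) D' :=
    nsum_nadd _ _ _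
  have h3 : nsumBelow (fun _ : ℕ => b - b') D' ≤ (D' : Ordinal) ⨳ (b - b') :=
    nsum_le_nmul fun _ _ => le_rfl
  have h4 : nsumBelow (fun d => β d - b) D' = nsumBelow (fun d => β d - b) D :=
    nsum_eq_zero_tail hDD' fun d hd => by
      rw [hβconst d hd]; exact Ordinal.sub_self _
  calc ω ⨳ b' ♯ nsumBelow (fun d => β' d - b') D'
      ≤ ω ⨳ b' ♯ ((D' : Ordinal) ⨳ (b - b') ♯ nsumBelow (fun d => β d - b) D) := by
        refine nadd_le_nadd_left ?_ _
        rw [← h4]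
        exact h1.trans (h2.le.trans (nadd_le_nadd_right h3 _))
    _ = ((D' : Ordinal) ⨳ (b - b') ♯ ω ⨳ b') ♯ nsumBelow (fun d => β d - b) D := by
        rw [← nadd_assoc, nadd_comm (ω ⨳ b')]
    _ < ω ⨳ b ♯ nsumBelow (fun d => β d - b) D := by
        exact nadd_lt_nadd_right (HBTArith.meas_key hb D') _

end HBT


namespace HBT

variable {A : Type*} [Ring A]

/-- The `A`-submodule of coefficients in degree `e` of elements of `I` of degree `≤ e`. -/
noncomputable def coeffMod (e : ℕ) (I : Submodule (Polynomial A) (Polynomial A)) :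
    Submodule A A where
  carrier := {a | ∃ p, p ∈ I ∧ p.degree ≤ (e : WithBot ℕ) ∧ p.coeff e = a}
  add_mem' := by
    rintro a b ⟨p, hp, hdp, rfl⟩ ⟨q, hq, hdq, rfl⟩
    exact ⟨p + q, add_mem hp hq, (Polynomial.degree_add_le p q).trans (max_le hdp hdq),
      Polynomial.coeff_add p q e⟩
  zero_mem' := ⟨0, zero_mem _, by simp, by simp⟩
  smul_mem' := by
    rintro c a ⟨p, hp, hdp, rfl⟩
    refine ⟨Polynomial.C c * p, ?_, ?_, ?_⟩
    · have := I.smul_mem (Polynomial.C c) hp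
      rwa [_root_.smul_eq_mul] at this
    · calc (Polynomial.C c * p).degree ≤ (Polynomial.C c).degree + p.degree :=
            Polynomial.degree_mul_le _ _
        _ ≤ 0 + (e : WithBot ℕ) := add_le_add Polynomial.degree_C_le hdp
        _ = (e : WithBot ℕ) := zero_add _
    · rw [Polynomial.coeff_C_mul, _root_.smul_eq_mul]

theorem coeffMod_mono {e : ℕ} {I J : Submodule (Polynomial A) (Polynomial A)} (h : I ≤ J) :
    coeffMod e I ≤ coeffMod e J := by
  rintro a ⟨p, hp, hdp, rfl⟩
  exact ⟨p, h hp, hdp, rfl⟩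

theorem lc_mem_coeffMod {I : Submodule (Polynomial A) (Polynomial A)} {g : Polynomial A}
    (hg : g ∈ I) {d : ℕ} (hd : g.natDegree ≤ d) : g.leadingCoeff ∈ coeffMod d I := by
  refine ⟨Polynomial.X ^ (d - g.natDegree) * g, ?_, ?_, ?_⟩
  · have := I.smul_mem (Polynomial.X ^ (d - g.natDegree)) hg
    rwa [_root_.smul_eq_mul] at this
  · calc (Polynomial.X ^ (d - g.natDegree) * g).degree
        ≤ (Polynomial.X ^ (d - g.natDegree) : Polynomial A).degree + g.degree :=
          Polynomial.degree_mul_le _ _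
      _ ≤ ((d - g.natDegree : ℕ) : WithBot ℕ) + (g.natDegree : WithBot ℕ) :=
          add_le_add (Polynomial.degree_X_pow_le _) (Polynomial.degree_le_natDegree)
      _ = ((d - g.natDegree + g.natDegree : ℕ) : WithBot ℕ) := by
          rw [Nat.cast_add]
      _ = (d : WithBot ℕ) := by
          congr 1
          omega
  · have h1 : d = g.natDegree + (d - g.natDegree) := by omega
    nth_rewrite 2 [h1]
    rw [Polynomial.coeff_X_pow_mul]
    rfl

/-- Reduction to a representative with leading coefficient not in the coefficient module. -/
theorem reduce (I : Submodule (Polynomial A) (Polynomial A)) :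
    ∀ (n : ℕ) (x : Polynomial A), x.natDegree = n → x ∉ I →
    ∃ g : Polynomial A, g - x ∈ I ∧ g.leadingCoeff ∉ coeffMod g.natDegree I := by
  intro n
  induction n using Nat.strong_induction_on with
  | _ n IH =>
  intro x hn hx
  by_cases hlc : x.leadingCoeff ∈ coeffMod x.natDegree I
  · obtain ⟨h, hhI, hhd, hhc⟩ := hlc
    have hx'I : x - h ∉ I := by
      intro hmem
      rw [← sub_add_cancel x h] at hx
      exact hx (add_mem hmem hhI)
    have hx'0 : x - h ≠ 0 := fun h0 => hx'I (h0 ▸ zero_mem I)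
    have hdeg : (x - h).degree < (x.natDegree : WithBot ℕ) := by
      rw [Polynomial.degree_lt_iff_coeff_zero]
      intro m hm
      have hm' : x.natDegree ≤ m := by exact_mod_cast hm
      rcases eq_or_lt_of_le hm' with heq | hlt
      · have hh : x.coeff x.natDegree = x.leadingCoeff := rfl
        rw [Polynomial.coeff_sub, ← heq, hhc, hh]
        exact _root_.sub_self _
      · have hdm : h.degree < (m : WithBot ℕ) := lt_of_le_of_lt hhd (by exact_mod_cast hlt)
        rw [Polynomial.coeff_sub, Polynomial.coeff_eq_zero_of_natDegree_lt hlt,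
          Polynomial.coeff_eq_zero_of_degree_lt hdm]
        exact _root_.sub_self _
    have hltn : (x - h).natDegree < n := by
      rw [← hn]
      exact (Polynomial.natDegree_lt_iff_degree_lt hx'0).2 hdeg
    obtain ⟨g, hgI, hglc⟩ := IH _ hltn (x - h) rfl hx'I
    refine ⟨g, ?_, hglc⟩
    have heq : g - x = (g - (x - h)) - h := by abel
    rw [heq]
    exact sub_mem hgI hhI
  · exact ⟨x, by rw [_root_.sub_self]; exact zero_mem I, hlc⟩

end HBT


namespace HBT
open Ordinal Polynomial

theorem main_induction {A : Type*} [Ring A] :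
    ∀ (μ : Ordinal) (σ : List (Polynomial A)) (D : ℕ) (τ : ℕ → List A) (β : ℕ → Ordinal),
    (∀ e, spanL A (τ e) ≤ coeffMod e (spanL (Polynomial A) σ)) →
    (∀ e, AlphaGood A (β e) (τ e)) →
    (∀ e e', e ≤ e' → spanL A (τ e) ≤ spanL A (τ e')) →
    (∀ e, D ≤ e → τ e = τ D) →
    (∀ e, D ≤ e → β e = β D) →
    μ = Meas D β →
    AlphaGood (Polynomial A) μ σ := by
  intro μ
  induction μ using Ordinal.induction with
  | h μ IHμ =>
  intro σ D τ β hτN hAG hτmono hτconst hβconst hμ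
  rw [alphaGood_iff]
  intro x
  by_cases hx : x ∈ spanL (Polynomial A) σ
  · exact Or.inl ((goodList_append_iff _ σ x).2 hx)
  right
  obtain ⟨g, hgI, hglc⟩ := reduce (spanL (Polynomial A) σ) x.natDegree x rfl hx
  have hII' : spanL (Polynomial A) σ ≤ spanL (Polynomial A) (σ ++ [x]) :=
    spanL_mono _ fun y hy => List.mem_append_left _ hy
  have hxI' : x ∈ spanL (Polynomial A) (σ ++ [x]) :=
    mem_spanL_self _ (List.mem_append_right _ (List.mem_singleton_self x))
  have hgI' : g ∈ spanL (Polynomial A) (σ ++ [x]) := by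
    rw [← sub_add_cancel g x]
    exact add_mem (hII' hgI) hxI'
  set e := g.natDegree with he
  set lc := g.leadingCoeff with hlcdef
  have hlcτ : lc ∉ spanL A (τ e) := fun hmem => hglc (hτN e hmem)
  obtain ⟨γ, hγ, hAGγ⟩ := alphaGood_step A (hAG e) hlcτ
  set D' := max D e with hD'
  set τ' := fun d => if d < e then τ d else τ d ++ [lc] with hτ'
  set β' := fun d => if d < e then β d else min (β d) γ with hβ'
  have hτ'lt : ∀ d, d < e → τ' d = τ d := fun d hd => by simp only [hτ', if_pos hd]
  have hτ'ge : ∀ d, e ≤ d → τ' d = τ d ++ [lc] := fun d hd => by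
    simp only [hτ', if_neg (not_lt.2 hd)]
  have hβ'lt : ∀ d, d < e → β' d = β d := fun d hd => by simp only [hβ', if_pos hd]
  have hβ'ge : ∀ d, e ≤ d → β' d = min (β d) γ := fun d hd => by
    simp only [hβ', if_neg (not_lt.2 hd)]
  have hβ'le : ∀ d, β' d ≤ β d := by
    intro d
    by_cases hd : d < e
    · rw [hβ'lt d hd]
    · rw [hβ'ge d (not_lt.1 hd)]; exact min_le_left _ _
  have hsub : ∀ d, spanL A (τ d) ≤ spanL A (τ d ++ [lc]) := fun d =>
    spanL_mono _ fun y hy => List.mem_append_left _ hy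
  -- new invariants
  have hτN' : ∀ d, spanL A (τ' d) ≤ coeffMod d (spanL (Polynomial A) (σ ++ [x])) := by
    intro d
    by_cases hd : d < e
    · rw [hτ'lt d hd]
      exact (hτN d).trans (coeffMod_mono hII')
    · rw [hτ'ge d (not_lt.1 hd), spanL_append]
      refine sup_le ((hτN d).trans (coeffMod_mono hII')) ?_
      rw [Submodule.span_le, Set.singleton_subset_iff]
      exact lc_mem_coeffMod hgI' (not_lt.1 hd)
  have hAG' : ∀ d, AlphaGood A (β' d) (τ' d) := by
    intro d
    by_cases hd : d < e
    · rw [hτ'lt d hd, hβ'lt d hd]; exact hAG d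
    · have hed : e ≤ d := not_lt.1 hd
      rw [hτ'ge d hed, hβ'ge d hed]
      rcases le_total γ (β d) with hc | hc
      · rw [min_eq_right hc]
        refine alphaGood_mono A γ γ (τ e ++ [lc]) (τ d ++ [lc]) hAGγ ?_ le_rfl
        rw [spanL_append, spanL_append]
        exact sup_le_sup_right (hτmono e d hed) _
      · rw [min_eq_left hc]
        exact alphaGood_mono A (β d) (β d) (τ d) (τ d ++ [lc]) (hAG d) (hsub d) le_rfl
  have hτmono' : ∀ d d', d ≤ d' → spanL A (τ' d) ≤ spanL A (τ' d') := by
    intro d d' hdd'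
    by_cases h2 : d' < e
    · rw [hτ'lt d (lt_of_le_of_lt hdd' h2), hτ'lt d' h2]
      exact hτmono d d' hdd'
    · by_cases h1 : d < e
      · rw [hτ'lt d h1, hτ'ge d' (not_lt.1 h2)]
        exact (hτmono d d' hdd').trans (hsub d')
      · rw [hτ'ge d (not_lt.1 h1), hτ'ge d' (not_lt.1 h2), spanL_append, spanL_append]
        exact sup_le_sup_right (hτmono d d' hdd') _
  have hτconst' : ∀ d, D' ≤ d → τ' d = τ' D' := by
    intro d hd
    rw [hτ'ge d (le_trans (le_max_right D e) hd), hτ'ge D' (le_max_right D e),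
      hτconst d (le_trans (le_max_left D e) hd), hτconst D' (le_max_left D e)]
  have hβconst' : ∀ d, D' ≤ d → β' d = β' D' := by
    intro d hd
    rw [hβ'ge d (le_trans (le_max_right D e) hd), hβ'ge D' (le_max_right D e),
      hβconst d (le_trans (le_max_left D e) hd), hβconst D' (le_max_left D e)]
  have hβ'D' : β' D' = min (β D) γ := by
    rw [hβ'ge D' (le_max_right D e), hβconst D' (le_max_left D e)]
  have hβ'e : β' e = γ := by
    rw [hβ'ge e le_rfl]
    exact min_eq_right hγ.le
  have hlt : Meas D' β' < μ := by
    rw [hμ]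
    rcases lt_or_ge γ (β D) with hcase | hcase
    · refine meas_lt_smaller_base (le_max_left D e) ?_ (fun d _ => hβ'le d) hβconst
      rw [hβ'D', min_eq_right hcase.le]
      exact hcase
    · have heD : e < D := by
        by_contra hh
        push_neg at hh
        rw [hβconst e hh] at hγ
        exact absurd hγ (not_lt.2 hcase)
      have hD'D : D' = D := max_eq_left heD.le
      rw [hD'D]
      refine meas_lt_same_base e heD (fun d _ => hβ'le d) ?_ ?_ ?_
      · rw [hβ'e]; exact hcase
      · rw [hβ'e]; exact hγ
      · rw [hβ'ge D heD.le]
        exact min_eq_left hcase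
  refine ⟨Meas D' β', hlt, ?_⟩
  exact IHμ _ hlt (σ ++ [x]) D' τ' β' hτN' hAG' hτmono' hτconst' hβconst' rfl

end HBT

/-- If `A` is an `α`-Noetherian ring, then `A[X]` is `(ω ⊗ α)`-Noetherian, where
`⊗` is the Hessenberg natural product. -/
theorem polynomial_ring_nmul_noetherian {A : Type*} [Ring A] (α : Ordinal)
    (h : AlphaGood A α ([] : List A)) :
    AlphaGood (Polynomial A) (Ordinal.nmul Ordinal.omega0 α)
      ([] : List (Polynomial A)) := by
  have hmeas : Ordinal.nmul Ordinal.omega0 α = HBT.Meas 0 (fun _ => α) := by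
    unfold HBT.Meas
    rw [show HBT.nsumBelow (fun _ => α - α) 0 = 0 from rfl, Ordinal.nadd_zero]
  refine HBT.main_induction _ ([]) 0 (fun _ => ([] : List A)) (fun _ => α)
    ?_ ?_ ?_ ?_ ?_ hmeas
  · intro e
    have hb : HBT.spanL A ([] : List A) = ⊥ := by
      unfold HBT.spanL
      convert Submodule.span_empty
      ext y
      simp
    rw [hb]
    exact bot_le
  · intro e; exact h
  · intro e e' _; exact le_rfl
  · intro e _; rfl
  · intro e _; rfl
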